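/- Let (g,h,φ) be a morphism Lie algebra with representation (V,W,ψ), and let (θ,γ,η) ∈ Hom(Λ²g,V) ⊕ Hom(Λ²h,W) ⊕ Hom(g,W) be a 2-cocycle. Define ĝ = g ⊕ V with bracket [(x,v),(x',v')] = ([x,x'], ρ_V(x)v' − ρ_V(x')v + θ(x,x')), ĥ = h ⊕ W with bracket [(h,w),(h',w')] = ([h,h'], ρ_W(h)w' − ρ_W(h')w + γ(h,h')), and φ̂(x,v) = (φ(x), ψ(v) + η(x)). Then ĝ and ĥ are Lie algebras and φ̂ : ĝ → ĥ is a Lie algebra homomorphism, so (ĝ, ĥ, φ̂) is a morphism Lie algebra. -/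

import Mathlib

attribute [local instance] LieRing.ofAssociativeRing

/-- The Chevalley–Eilenberg differential (on plain cochains), for a bracket `br` on `L`
and an action `ρ` of `L` on `M`:
`(δf)(x₁,…,x_{n+1}) = Σᵢ (-1)^{i+1} ρ(xᵢ) f(…,x̂ᵢ,…) + Σ_{i<j} (-1)^{i+j} f([xᵢ,xⱼ],…,x̂ᵢ,…,x̂ⱼ,…)`. -/
def ceD {L M : Type*} [AddCommGroup M] (br : L → L → L) (ρ : L → M → M)
    {n : ℕ} (f : (Fin n → L) → M) : (Fin (n + 1) → L) → M :=
  fun x =>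
    (∑ i : Fin (n + 1), ((-1 : ℤ) ^ (i : ℕ)) • ρ (x i) (f (x ∘ i.succAbove)))
      + ∑ i : Fin (n + 1), ∑ j : Fin (n + 1),
          if h : (i : ℕ) < (j : ℕ) then
            ((-1 : ℤ) ^ ((i : ℕ) + (j : ℕ))) • f (fun t : Fin n =>
              Fin.cons (α := fun _ => L) (br (x i) (x j))
                (fun s : Fin (n - 1) =>
                  x (j.succAbove (Fin.cast (by have := j.isLt; omega)
                    (Fin.succAbove ⟨(i : ℕ), by have := j.isLt; omega⟩ s))))
                (Fin.cast (by have := j.isLt; omega) t))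
          else 0

/-- The bracket on `ĝ = g ⊕ V` determined by a 2-cochain `θ`:
`[(x,v),(x',v')] = ([x,x'], ρV(x)v' − ρV(x')v + θ(x,x'))`. -/
def extBracket {k g V : Type*} [CommRing k] [LieRing g] [LieAlgebra k g]
    [AddCommGroup V] [Module k V] (ρV : g →ₗ⁅k⁆ Module.End k V)
    (θ : AlternatingMap k g V (Fin 2)) (a b : g × V) : g × V :=
  (⁅a.1, b.1⁆, ρV a.1 b.2 - ρV b.1 a.2 + θ ![a.1, b.1])

/-- The map `φ̂ : ĝ → ĥ`, `φ̂(x,v) = (φ x, ψ v + η x)`. -/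
def extHom {k g h V W : Type*} [CommRing k] [LieRing g] [LieAlgebra k g]
    [LieRing h] [LieAlgebra k h] [AddCommGroup V] [Module k V]
    [AddCommGroup W] [Module k W]
    (φ : g →ₗ⁅k⁆ h) (ψ : V →ₗ[k] W) (η : g →ₗ[k] W) (a : g × V) : h × W :=
  (φ a.1, ψ a.2 + η a.1)


section Aux

lemma ceD2_apply {L M : Type*} [AddCommGroup M] (br : L → L → L) (ρ : L → M → M)
    (f : (Fin 2 → L) → M) (x y z : L) :
    ceD br ρ f ![x,y,z] = ρ x (f ![y,z]) - ρ y (f ![x,z]) + ρ z (f ![x,y])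
      - f ![br x y, z] + f ![br x z, y] - f ![br y z, x] := by
  show (∑ i : Fin 3, _) + (∑ i : Fin 3, ∑ j : Fin 3, _) = _
  rw [Fin.sum_univ_three]
  conv_lhs => rw [Fin.sum_univ_three, Fin.sum_univ_three, Fin.sum_univ_three, Fin.sum_univ_three]
  norm_num
  rw [show ![x,y,z] 2 = z from rfl]
  rw [show (![x,y,z] ∘ Fin.succ) = ![y,z] from by funext t; fin_cases t <;> rfl,
    show (![x,y,z] ∘ Fin.succAbove 1) = ![x,z] from by funext t; fin_cases t <;> rfl,
    show (![x,y,z] ∘ Fin.succAbove 2) = ![x,y] from by funext t; fin_cases t <;> rfl,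
    show (fun t => Fin.cons (α := fun _ => L) (br x y) (fun _ : Fin 1 => z) t) = ![br x y, z] from by
      funext t; fin_cases t <;> rfl,
    show (fun t => Fin.cons (α := fun _ => L) (br x z) (fun s : Fin 1 => ![x,y,z] (Fin.succAbove 2 s.succ)) t) = ![br x z, y] from by
      funext t; fin_cases t <;> rfl,
    show (fun t => Fin.cons (α := fun _ => L) (br y z) (fun s : Fin 1 => ![x,y,z] (Fin.succAbove 2 (Fin.succAbove 1 s))) t) = ![br y z, x] from by
      funext t; fin_cases t <;> rfl]
  abel

lemma ceD1_apply {L M : Type*} [AddCommGroup M] (br : L → L → L) (ρ : L → M → M)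
    (f : (Fin 1 → L) → M) (x y : L) :
    ceD br ρ f ![x,y] = ρ x (f ![y]) - ρ y (f ![x]) - f ![br x y] := by
  show (∑ i : Fin 2, _) + (∑ i : Fin 2, ∑ j : Fin 2, _) = _
  rw [Fin.sum_univ_two]
  conv_lhs => rw [Fin.sum_univ_two, Fin.sum_univ_two, Fin.sum_univ_two]
  norm_num
  rw [show (![x,y] ∘ Fin.succ) = ![y] from by funext t; fin_cases t <;> rfl,
    show (![x,y] ∘ Fin.succAbove 1) = ![x] from by funext t; fin_cases t <;> rfl,
    show (fun t => Fin.cons (α := fun _ => L) (br x y) (fun _ : Fin 0 => y) t) = ![br x y] from by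
      funext t; fin_cases t <;> rfl]
  abel

variable {k g V : Type*} [CommRing k] [LieRing g] [LieAlgebra k g]
  [AddCommGroup V] [Module k V]

lemma alt_swap (θ : AlternatingMap k g V (Fin 2)) (a b : g) :
    θ ![a, b] = - θ ![b, a] := by
  have h := θ.map_swap ![b, a] (show (0 : Fin 2) ≠ 1 by decide)
  rw [show (![b,a] ∘ Equiv.swap (0 : Fin 2) 1) = ![a,b] from by
    funext t; fin_cases t <;> simp] at h
  exact h

lemma alt_self (θ : AlternatingMap k g V (Fin 2)) (a : g) : θ ![a, a] = 0 :=
  θ.map_eq_zero_of_eq ![a, a] (i := 0) (j := 1) rfl (by decide)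

lemma ext_alt (ρV : g →ₗ⁅k⁆ Module.End k V) (θ : AlternatingMap k g V (Fin 2)) :
    ∀ a : g × V, extBracket ρV θ a a = 0 := by
  intro a
  simp only [extBracket, alt_self, lie_self, sub_self, zero_add]
  rfl

lemma ext_jacobi (ρV : g →ₗ⁅k⁆ Module.End k V) (θ : AlternatingMap k g V (Fin 2))
    (hθ : ceD (fun a b : g => ⁅a, b⁆) (fun x u => ρV x u) (⇑θ) = 0) :
    ∀ a b c : g × V,
      extBracket ρV θ a (extBracket ρV θ b c) =
        extBracket ρV θ (extBracket ρV θ a b) c +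
          extBracket ρV θ b (extBracket ρV θ a c) := by
  rintro ⟨x, u⟩ ⟨y, v⟩ ⟨z, w⟩
  have key := congrFun hθ ![x, y, z]
  rw [ceD2_apply] at key
  simp only [Pi.zero_apply] at key
  have brkt : ∀ (a b : g) (m : V), ρV ⁅a, b⁆ m = ρV a (ρV b m) - ρV b (ρV a m) := by
    intro a b m
    rw [LieHom.map_lie, Ring.lie_def, LinearMap.sub_apply, Module.End.mul_apply,
      Module.End.mul_apply]
  simp only [extBracket, Prod.mk_add_mk, Prod.mk.injEq]
  refine ⟨leibniz_lie x y z, ?_⟩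
  simp only [map_sub, map_add, brkt, alt_swap θ x ⁅y,z⁆, alt_swap θ y ⁅x,z⁆]
  refine sub_eq_zero.mp (Eq.trans ?_ key)
  abel

end Aux

/-- Let `(g,h,φ)` be a morphism Lie algebra with representation `(V,W,ψ)`
and let `(θ,γ,η)` be a 2-cocycle of the morphism Lie algebra complex.  Then
`ĝ = g ⊕ V` and `ĥ = h ⊕ W` with the brackets
`[(x,v),(x',v')] = ([x,x'], ρV(x)v' − ρV(x')v + θ(x,x'))` (resp. with `ρW, γ`)
are Lie algebras, and `φ̂(x,v) = (φ x, ψ v + η x)` is a Lie algebra homomorphism, so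
`(ĝ, ĥ, φ̂)` is a morphism Lie algebra. -/
theorem statement14 {k g h V W : Type*} [CommRing k]
    [LieRing g] [LieAlgebra k g] [LieRing h] [LieAlgebra k h]
    [AddCommGroup V] [Module k V] [AddCommGroup W] [Module k W]
    (φ : g →ₗ⁅k⁆ h) (ρV : g →ₗ⁅k⁆ Module.End k V) (ρW : h →ₗ⁅k⁆ Module.End k W)
    (ψ : V →ₗ[k] W)
    (hψ : ∀ (x : g) (v : V), ψ (ρV x v) = ρW (φ x) (ψ v))
    (θ : AlternatingMap k g V (Fin 2)) (γ : AlternatingMap k h W (Fin 2))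
    (η : g →ₗ[k] W)
    -- the 2-cocycle conditions δ'θ = 0, δ''γ = 0, ψ∘θ − γ∘Λ²φ − δ'''η = 0 :
    (hθ : ceD (fun a b : g => ⁅a, b⁆) (fun x u => ρV x u) (⇑θ) = 0)
    (hγ : ceD (fun a b : h => ⁅a, b⁆) (fun z w => ρW z w) (⇑γ) = 0)
    (hη : (fun y : Fin 2 → g =>
        ψ (θ y) - γ (fun i => φ (y i))
          - ceD (fun a b : g => ⁅a, b⁆) (fun x w => ρW (φ x) w)
              (fun t : Fin 1 → g => η (t 0)) y) = 0) :
    -- ĝ is a Lie algebra: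
    (∀ a : g × V, extBracket ρV θ a a = 0) ∧
    (∀ a b c : g × V,
      extBracket ρV θ a (extBracket ρV θ b c) =
        extBracket ρV θ (extBracket ρV θ a b) c +
          extBracket ρV θ b (extBracket ρV θ a c)) ∧
    -- ĥ is a Lie algebra:
    (∀ a : h × W, extBracket ρW γ a a = 0) ∧
    (∀ a b c : h × W,
      extBracket ρW γ a (extBracket ρW γ b c) =
        extBracket ρW γ (extBracket ρW γ a b) c +
          extBracket ρW γ b (extBracket ρW γ a c)) ∧
    -- φ̂ is a homomorphism of Lie algebras:
    (∀ a b : g × V,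
      extHom φ ψ η (extBracket ρV θ a b) =
        extBracket ρW γ (extHom φ ψ η a) (extHom φ ψ η b)) := by
  refine ⟨ext_alt ρV θ, ext_jacobi ρV θ hθ, ext_alt ρW γ, ext_jacobi ρW γ hγ, ?_⟩
  rintro ⟨x, u⟩ ⟨y, v⟩
  have key := congrFun hη ![x, y]
  simp only [Pi.zero_apply] at key
  rw [ceD1_apply] at key
  simp only [Matrix.cons_val_zero] at key
  rw [show (fun i => φ (![x, y] i)) = ![φ x, φ y] from by funext t; fin_cases t <;> rfl] at key
  simp only [extHom, extBracket, Prod.mk.injEq]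
  refine ⟨LieHom.map_lie φ x y, ?_⟩
  simp only [map_sub, map_add, hψ]
  refine sub_eq_zero.mp (Eq.trans ?_ key)
  abel
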